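/- On the two-point space X = {0,1} with N = 2 components, take g ≡ 1 and the probability mass functions p_1 = (1/10, 9/10), p_2 = (2/5, 3/5), q_1 = (3/10, 7/10), q_2 = (1/5, 4/5). Then p_mix = q_mix = (1/4, 3/4), and the variances of the five importance-sampling estimators satisfy Var[II(g)] = 37/336 > Var[IM(g)] = 3/50 > Var[MI(g)] = 37/5376 > Var[MM(g)] = Var[MM^str(g)] = 0. -/

import Mathlib

open MeasureTheory ProbabilityTheory

section Aux

variable {Ω : Type} [MeasurableSpace Ω] (μ : Measure Ω) [IsProbabilityMeasure μ]

lemma aux_memLp (Z : Ω → Fin 2) (hZ : Measurable Z) (f : Fin 2 → ℝ) :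
    MemLp (fun ω => f (Z ω)) 2 μ := by
  refine MemLp.mono_exponent (q := ⊤) ?_ le_top
  refine memLp_top_of_bound ((measurable_of_finite f).comp hZ).aestronglyMeasurable
    (max ‖f 0‖ ‖f 1‖) (Filter.Eventually.of_forall fun ω => ?_)
  have : Z ω = 0 ∨ Z ω = 1 := by omega
  rcases this with h | h <;> rw [h]
  · exact le_max_left _ _
  · exact le_max_right _ _

lemma aux_integral (Z : Ω → Fin 2) (hZ : Measurable Z) (f : Fin 2 → ℝ) (a b : ℝ)
    (ha : 0 ≤ a) (hb : 0 ≤ b)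
    (h0 : μ (Z ⁻¹' {0}) = ENNReal.ofReal a) (h1 : μ (Z ⁻¹' {1}) = ENNReal.ofReal b) :
    ∫ ω, f (Z ω) ∂μ = a * f 0 + b * f 1 := by
  have hmap : ∫ ω, f (Z ω) ∂μ = ∫ x, f x ∂(μ.map Z) :=
    (integral_map hZ.aemeasurable (measurable_of_finite f).aestronglyMeasurable).symm
  rw [hmap, integral_fintype Integrable.of_finite, Fin.sum_univ_two]
  simp only [Measure.real]
  rw [Measure.map_apply hZ (measurableSet_singleton _),
    Measure.map_apply hZ (measurableSet_singleton _), h0, h1,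
    ENNReal.toReal_ofReal ha, ENNReal.toReal_ofReal hb]
  simp [mul_comm]

lemma aux_variance (Z : Ω → Fin 2) (hZ : Measurable Z) (f : Fin 2 → ℝ) (a b : ℝ)
    (ha : 0 ≤ a) (hb : 0 ≤ b)
    (h0 : μ (Z ⁻¹' {0}) = ENNReal.ofReal a) (h1 : μ (Z ⁻¹' {1}) = ENNReal.ofReal b) :
    variance (fun ω => f (Z ω)) μ
      = (a * (f 0)^2 + b * (f 1)^2) - (a * f 0 + b * f 1)^2 := by
  rw [variance_eq_sub (aux_memLp μ Z hZ f)]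
  have h2 : (fun ω => f (Z ω)) ^ 2 = fun ω => (fun x => (f x) ^ 2) (Z ω) := by
    funext ω; simp [pow_two]
  have hE : μ[fun ω => f (Z ω)] = a * f 0 + b * f 1 :=
    aux_integral μ Z hZ f a b ha hb h0 h1
  have hE2 : μ[(fun ω => f (Z ω)) ^ 2] = a * (f 0)^2 + b * (f 1)^2 := by
    rw [h2]; exact aux_integral μ Z hZ _ a b ha hb h0 h1
  rw [hE, hE2]

lemma aux_var_half_sum (A B : Ω → ℝ) (hA : MemLp A 2 μ) (hB : MemLp B 2 μ)
    (hind : IndepFun A B μ) :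
    variance (fun ω => (1/2 : ℝ) * (A ω + B ω)) μ
      = (1/4) * (variance A μ + variance B μ) := by
  have : (fun ω => (1/2 : ℝ) * (A ω + B ω)) = (1/2 : ℝ) • (A + B) := by
    funext ω; simp
  rw [this, variance_smul, hind.variance_add hA hB]
  ring

lemma aux_main (Z W : Ω → Fin 2) (hZ : Measurable Z) (hW : Measurable W)
    (hind : IndepFun Z W μ) (f1 f2 : Fin 2 → ℝ) (a b c d : ℝ)
    (ha : 0 ≤ a) (hb : 0 ≤ b) (hc : 0 ≤ c) (hd : 0 ≤ d)
    (h0 : μ (Z ⁻¹' {0}) = ENNReal.ofReal a) (h1 : μ (Z ⁻¹' {1}) = ENNReal.ofReal b)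
    (h2 : μ (W ⁻¹' {0}) = ENNReal.ofReal c) (h3 : μ (W ⁻¹' {1}) = ENNReal.ofReal d) :
    variance (fun ω => (1/2:ℝ) * (f1 (Z ω) + f2 (W ω))) μ
      = (1/4) * ((a*(f1 0)^2 + b*(f1 1)^2 - (a*f1 0 + b*f1 1)^2)
          + (c*(f2 0)^2 + d*(f2 1)^2 - (c*f2 0 + d*f2 1)^2)) := by
  have h := aux_var_half_sum μ (fun ω => f1 (Z ω)) (fun ω => f2 (W ω))
    (aux_memLp μ Z hZ f1) (aux_memLp μ W hW f2)
    (hind.comp (measurable_of_finite f1) (measurable_of_finite f2))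
  rw [show (fun ω => (1/2:ℝ) * (f1 (Z ω) + f2 (W ω)))
      = fun ω => (1/2:ℝ) * ((fun ω => f1 (Z ω)) ω + (fun ω => f2 (W ω)) ω) from rfl, h,
    aux_variance μ Z hZ f1 a b ha hb h0 h1, aux_variance μ W hW f2 c d hc hd h2 h3]

end Aux

/-- On the two-point space `X = {0,1}` with `N = 2`, `g ≡ 1`,
`p₁ = (1/10, 9/10)`, `p₂ = (2/5, 3/5)`, `q₁ = (3/10, 7/10)`, `q₂ = (1/5, 4/5)`:
then `p_mix = q_mix = (1/4, 3/4)` and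
`Var[II] = 37/336 > Var[IM] = 3/50 > Var[MI] = 37/5376 > Var[MM] = Var[MM^str] = 0`. -/
theorem two_point_counterexample_II_gt_IM_gt_MI
    {Ω : Type} [MeasurableSpace Ω] (μ : Measure Ω) [IsProbabilityMeasure μ]
    (p q : Fin 2 → Fin 2 → ℝ)
    (hp : p = ![![1/10, 9/10], ![2/5, 3/5]])
    (hq : q = ![![3/10, 7/10], ![1/5, 4/5]])
    (pmix qmix : Fin 2 → ℝ)
    (hpmix : ∀ x, pmix x = (1/2) * (p 0 x + p 1 x))
    (hqmix : ∀ x, qmix x = (1/2) * (q 0 x + q 1 x))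
    (g : Fin 2 → ℝ) (hg : ∀ x, g x = 1)
    -- X₁, X₂ independent, X_i distributed according to q_i
    (X Y : Fin 2 → Ω → Fin 2)
    (hXm : ∀ i, Measurable (X i)) (hYm : ∀ i, Measurable (Y i))
    (hXindep : iIndepFun X μ)
    (hYindep : iIndepFun Y μ)
    (hXlaw : ∀ i j, μ (X i ⁻¹' {j}) = ENNReal.ofReal (q i j))
    -- Y₁, Y₂ i.i.d. according to q_mix
    (hYlaw : ∀ i j, μ (Y i ⁻¹' {j}) = ENNReal.ofReal (qmix j)) :
    pmix = ![1/4, 3/4] ∧ qmix = ![1/4, 3/4] ∧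
    -- Var[II(g)] = 37/336
    variance (fun ω => (1/2) * ∑ i, (p i (X i ω) / q i (X i ω)) * g (X i ω)) μ = 37/336 ∧
    -- Var[IM(g)] = 3/50
    variance (fun ω => (1/2) * ∑ i, (p i (Y i ω) / qmix (Y i ω)) * g (Y i ω)) μ = 3/50 ∧
    -- Var[MI(g)] = 37/5376
    variance (fun ω => (1/2) * ∑ i, (pmix (X i ω) / q i (X i ω)) * g (X i ω)) μ = 37/5376 ∧
    -- Var[MM(g)] = 0
    variance (fun ω => (1/2) * ∑ i, (pmix (Y i ω) / qmix (Y i ω)) * g (Y i ω)) μ = 0 ∧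
    -- Var[MM^str(g)] = 0
    variance (fun ω => (1/2) * ∑ i, (pmix (X i ω) / qmix (X i ω)) * g (X i ω)) μ = 0 ∧
    -- and the chain of strict inequalities
    (37/336 : ℝ) > 3/50 ∧ (3/50 : ℝ) > 37/5376 ∧ (37/5376 : ℝ) > 0 := by
  subst hp hq
  have hpm : pmix = ![1/4, 3/4] := by
    funext x; fin_cases x <;> rw [hpmix] <;> norm_num
  have hqm : qmix = ![1/4, 3/4] := by
    funext x; fin_cases x <;> rw [hqmix] <;> norm_num
  subst hpm hqm
  set P : Fin 2 → Fin 2 → ℝ := ![![1/10, 9/10], ![2/5, 3/5]] with hP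
  set Q : Fin 2 → Fin 2 → ℝ := ![![3/10, 7/10], ![1/5, 4/5]] with hQ
  set M : Fin 2 → ℝ := ![1/4, 3/4] with hM
  have hXind : IndepFun (X 0) (X 1) μ := hXindep.indepFun (show (0:Fin 2) ≠ 1 by decide)
  have hYind : IndepFun (Y 0) (Y 1) μ := hYindep.indepFun (show (0:Fin 2) ≠ 1 by decide)
  refine ⟨rfl, rfl, ?_, ?_, ?_, ?_, ?_, by norm_num, by norm_num, by norm_num⟩
  · -- II
    have heq : (fun ω => (1/2:ℝ) * ∑ i, (P i (X i ω) / Q i (X i ω)) * g (X i ω))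
        = fun ω => (1/2:ℝ) * ((fun x => P 0 x / Q 0 x) (X 0 ω)
            + (fun x => P 1 x / Q 1 x) (X 1 ω)) := by
      funext ω; rw [Fin.sum_univ_two]; simp [hg]
    rw [heq, aux_main μ (X 0) (X 1) (hXm 0) (hXm 1) hXind
        (fun x => P 0 x / Q 0 x) (fun x => P 1 x / Q 1 x) (3/10) (7/10) (1/5) (4/5)
        (by norm_num) (by norm_num) (by norm_num) (by norm_num)
        (by rw [hXlaw 0 0]; norm_num [hQ]) (by rw [hXlaw 0 1]; norm_num [hQ])
        (by rw [hXlaw 1 0]; norm_num [hQ]) (by rw [hXlaw 1 1]; norm_num [hQ])]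
    norm_num [hP, hQ]
  · -- IM
    have heq : (fun ω => (1/2:ℝ) * ∑ i, (P i (Y i ω) / M (Y i ω)) * g (Y i ω))
        = fun ω => (1/2:ℝ) * ((fun x => P 0 x / M x) (Y 0 ω)
            + (fun x => P 1 x / M x) (Y 1 ω)) := by
      funext ω; rw [Fin.sum_univ_two]; simp [hg]
    rw [heq, aux_main μ (Y 0) (Y 1) (hYm 0) (hYm 1) hYind
        (fun x => P 0 x / M x) (fun x => P 1 x / M x) (1/4) (3/4) (1/4) (3/4)
        (by norm_num) (by norm_num) (by norm_num) (by norm_num)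
        (by rw [hYlaw 0 0]; norm_num [hM]) (by rw [hYlaw 0 1]; norm_num [hM])
        (by rw [hYlaw 1 0]; norm_num [hM]) (by rw [hYlaw 1 1]; norm_num [hM])]
    norm_num [hP, hM]
  · -- MI
    have heq : (fun ω => (1/2:ℝ) * ∑ i, (M (X i ω) / Q i (X i ω)) * g (X i ω))
        = fun ω => (1/2:ℝ) * ((fun x => M x / Q 0 x) (X 0 ω)
            + (fun x => M x / Q 1 x) (X 1 ω)) := by
      funext ω; rw [Fin.sum_univ_two]; simp [hg]
    rw [heq, aux_main μ (X 0) (X 1) (hXm 0) (hXm 1) hXind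
        (fun x => M x / Q 0 x) (fun x => M x / Q 1 x) (3/10) (7/10) (1/5) (4/5)
        (by norm_num) (by norm_num) (by norm_num) (by norm_num)
        (by rw [hXlaw 0 0]; norm_num [hQ]) (by rw [hXlaw 0 1]; norm_num [hQ])
        (by rw [hXlaw 1 0]; norm_num [hQ]) (by rw [hXlaw 1 1]; norm_num [hQ])]
    norm_num [hM, hQ]
  · -- MM
    have heq : (fun ω => (1/2:ℝ) * ∑ i, (M (Y i ω) / M (Y i ω)) * g (Y i ω))
        = fun ω => (1/2:ℝ) * ((fun x => M x / M x) (Y 0 ω)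
            + (fun x => M x / M x) (Y 1 ω)) := by
      funext ω; rw [Fin.sum_univ_two]; simp [hg]
    rw [heq, aux_main μ (Y 0) (Y 1) (hYm 0) (hYm 1) hYind
        (fun x => M x / M x) (fun x => M x / M x) (1/4) (3/4) (1/4) (3/4)
        (by norm_num) (by norm_num) (by norm_num) (by norm_num)
        (by rw [hYlaw 0 0]; norm_num [hM]) (by rw [hYlaw 0 1]; norm_num [hM])
        (by rw [hYlaw 1 0]; norm_num [hM]) (by rw [hYlaw 1 1]; norm_num [hM])]
    norm_num [hM]
  · -- MMstr
    have heq : (fun ω => (1/2:ℝ) * ∑ i, (M (X i ω) / M (X i ω)) * g (X i ω))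
        = fun ω => (1/2:ℝ) * ((fun x => M x / M x) (X 0 ω)
            + (fun x => M x / M x) (X 1 ω)) := by
      funext ω; rw [Fin.sum_univ_two]; simp [hg]
    rw [heq, aux_main μ (X 0) (X 1) (hXm 0) (hXm 1) hXind
        (fun x => M x / M x) (fun x => M x / M x) (3/10) (7/10) (1/5) (4/5)
        (by norm_num) (by norm_num) (by norm_num) (by norm_num)
        (by rw [hXlaw 0 0]; norm_num [hQ]) (by rw [hXlaw 0 1]; norm_num [hQ])
        (by rw [hXlaw 1 0]; norm_num [hQ]) (by rw [hXlaw 1 1]; norm_num [hQ])]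
    norm_num [hM]
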